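/- arXiv:1610.03306 — 2 statements merged into one kernel-verified Lean document; each statement's English description precedes it below -/
import Mathlib

section
/- Let t = (m−s)/l ≥ 2. Let Γ be a simplicial complex that is a disjoint union of runs (for parameters m, l) of lengths s_1,…,s_r, and let E = E(s_1,…,s_r). Write each s_j = p_j(t+1) + d_j with p_j ≥ 0 and 0 ≤ d_j ≤ t. If d_j ∉ {1, 2} for some j, then H̃_i(E) = 0 for all i. -/
/-- An abstract simplicial complex on vertex type `V` (the empty face is always a face). -/
structure SComplex (V : Type*) where
  faces : Set (Finset V)
  empty_mem : ∅ ∈ faces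
  down_closed : ∀ ⦃σ τ : Finset V⦄, σ ∈ faces → τ ⊆ σ → τ ∈ faces

/-- Quotient of a submodule by a submodule of it (used for homology `ker/im`). -/
noncomputable def SubQuot {K : Type*} [Field K] {C : Type*} [AddCommGroup C] [Module K C]
    (S : Submodule K C) (T : Submodule K ↥S) : Type _ := ↥S ⧸ T

noncomputable instance {K : Type*} [Field K] {C : Type*} [AddCommGroup C] [Module K C]
    (S : Submodule K C) (T : Submodule K ↥S) : AddCommGroup (SubQuot S T) :=
  inferInstanceAs (AddCommGroup (↥S ⧸ T))

noncomputable instance {K : Type*} [Field K] {C : Type*} [AddCommGroup C] [Module K C]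
    (S : Submodule K C) (T : Submodule K ↥S) : Module K (SubQuot S T) :=
  inferInstanceAs (Module K (↥S ⧸ T))

namespace SComplex

variable {V : Type*}

/-- The simplicial complex generated by a given family of facets. -/
def ofFacets (F : Set (Finset V)) : SComplex V where
  faces := {τ | τ = ∅ ∨ ∃ σ ∈ F, τ ⊆ σ}
  empty_mem := Or.inl rfl
  down_closed := by
    rintro σ τ (rfl | ⟨σ', h1, h2⟩) hsub
    · exact Or.inl (Finset.subset_empty.mp hsub)
    · exact Or.inr ⟨σ', h1, hsub.trans h2⟩

/-- Union of two simplicial complexes. -/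
def union (Δ₁ Δ₂ : SComplex V) : SComplex V where
  faces := Δ₁.faces ∪ Δ₂.faces
  empty_mem := Or.inl Δ₁.empty_mem
  down_closed := by
    rintro σ τ (h | h) hs
    · exact Or.inl (Δ₁.down_closed h hs)
    · exact Or.inr (Δ₂.down_closed h hs)

/-- Intersection of two simplicial complexes. -/
def inter (Δ₁ Δ₂ : SComplex V) : SComplex V where
  faces := Δ₁.faces ∩ Δ₂.faces
  empty_mem := ⟨Δ₁.empty_mem, Δ₂.empty_mem⟩
  down_closed := fun _ _ h hs => ⟨Δ₁.down_closed h.1 hs, Δ₂.down_closed h.2 hs⟩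

variable [LinearOrder V] (Δ : SComplex V) (K : Type*) [Field K]

/-- The faces of dimension `i` (cardinality `i+1`); `i = -1` gives the empty face. -/
def Face (i : ℤ) : Type _ := {σ : Finset V // σ ∈ Δ.faces ∧ (σ.card : ℤ) = i + 1}

/-- The space of simplicial `i`-chains with coefficients in `K`
(including the empty face in degree `-1`, so that homology is reduced homology). -/
abbrev Chains (i : ℤ) : Type _ := Δ.Face i →₀ K

/-- The boundary of a single face, with the usual alternating signs determined by
the linear order on the vertices. -/
noncomputable def bd {i : ℤ} (σ : Δ.Face i) : Δ.Chains K (i - 1) :=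
  ∑ x ∈ σ.1.attach,
    Finsupp.single
      (⟨σ.1.erase x.1,
        Δ.down_closed σ.2.1 (Finset.erase_subset _ _), by
          have hx : x.1 ∈ σ.1 := x.2
          have h1 : 1 ≤ σ.1.card := Finset.card_pos.mpr ⟨x.1, hx⟩
          have h2 := σ.2.2
          rw [Finset.card_erase_of_mem hx, Nat.cast_sub h1]
          omega⟩ : Δ.Face (i - 1))
      ((-1 : K) ^ ((σ.1.filter fun y => y < x.1).card))

/-- The simplicial boundary map. -/
noncomputable def boundary (i : ℤ) : Δ.Chains K i →ₗ[K] Δ.Chains K (i - 1) :=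
  Finsupp.lsum K fun σ => LinearMap.toSpanSingleton K (Δ.Chains K (i - 1)) (Δ.bd K σ)

/-- Transport of chains along an equality of degrees. -/
noncomputable def chainsCast {i j : ℤ} (h : i = j) : Δ.Chains K i ≃ₗ[K] Δ.Chains K j :=
  h ▸ LinearEquiv.refl K (Δ.Chains K i)

/-- The `i`-th reduced simplicial homology of `Δ` with coefficients in `K`:
cycles modulo (the intersection with the) boundaries. -/
noncomputable def reducedHomology (i : ℤ) : Type _ :=
  SubQuot (LinearMap.ker (Δ.boundary K i))
    (Submodule.comap (LinearMap.ker (Δ.boundary K i)).subtype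
      (Submodule.map (Δ.chainsCast K (show i + 1 - 1 = i by ring)).toLinearMap
        (LinearMap.range (Δ.boundary K (i + 1)))))

noncomputable instance (i : ℤ) : AddCommGroup (Δ.reducedHomology K i) :=
  inferInstanceAs (AddCommGroup (SubQuot _ _))

noncomputable instance (i : ℤ) : Module K (Δ.reducedHomology K i) :=
  inferInstanceAs (Module K (SubQuot _ _))

end SComplex
section BigModule

open Finsupp

variable {V : Type*} [LinearOrder V] (K : Type*) [Field K] {v x y : V} {S : Finset V}

/-- The sign of vertex `x` relative to the finset `S`. -/
noncomputable def sgn (S : Finset V) (x : V) : K := (-1) ^ (S.filter (fun y => y < x)).card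

/-- Boundary of a single finset in the big free module. -/
noncomputable def bdAux (S : Finset V) : Finset V →₀ K :=
  ∑ x ∈ S, Finsupp.single (S.erase x) (sgn K S x)

/-- The global boundary operator on the big free module. -/
noncomputable def bigBd : (Finset V →₀ K) →ₗ[K] (Finset V →₀ K) :=
  Finsupp.lsum K fun S => LinearMap.toSpanSingleton K _ (bdAux K S)

noncomputable def coneAux (v : V) (S : Finset V) : Finset V →₀ K :=
  if v ∈ S then 0 else Finsupp.single (insert v S) (sgn K S v)

/-- The global cone operator on the big free module. -/
noncomputable def coneB (v : V) : (Finset V →₀ K) →ₗ[K] (Finset V →₀ K) :=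
  Finsupp.lsum K fun S => LinearMap.toSpanSingleton K _ (coneAux K v S)

lemma bigBd_single (S : Finset V) (c : K) :
    bigBd K (Finsupp.single S c) = c • bdAux K S := by
  simp [bigBd]

lemma coneB_single (v : V) (S : Finset V) (c : K) :
    coneB K v (Finsupp.single S c) = c • coneAux K v S := by
  simp [coneB]

lemma sgn_mul_self (S : Finset V) (x : V) : sgn K S x * sgn K S x = 1 := by
  rw [sgn, ← pow_add, ← two_mul, pow_mul]
  norm_num

lemma sgn_erase (hx : x ∈ S) (y : V) :
    sgn K (S.erase x) y = (if x < y then -1 else 1) * sgn K S y := by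
  unfold sgn
  rw [Finset.filter_erase]
  by_cases h : x < y
  · have hmem : x ∈ S.filter (fun z => z < y) := Finset.mem_filter.mpr ⟨hx, h⟩
    have h1 : 0 < (S.filter (fun z => z < y)).card := Finset.card_pos.mpr ⟨x, hmem⟩
    obtain ⟨k, hk⟩ : ∃ k, (S.filter (fun z => z < y)).card = k + 1 :=
      ⟨_, (Nat.succ_pred_eq_of_pos h1).symm⟩
    rw [Finset.card_erase_of_mem hmem, if_pos h, hk, pow_succ]
    simp
  · have hmem : x ∉ S.filter (fun z => z < y) := fun hc => h (Finset.mem_filter.mp hc).2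
    rw [Finset.erase_eq_of_notMem hmem, if_neg h, one_mul]

lemma sgn_insert (hv : v ∉ S) (y : V) :
    sgn K (insert v S) y = (if v < y then -1 else 1) * sgn K S y := by
  unfold sgn
  rw [Finset.filter_insert]
  by_cases h : v < y
  · have hmem : v ∉ S.filter (fun z => z < y) := fun hc => hv (Finset.mem_filter.mp hc).1
    rw [if_pos h, if_pos h, Finset.card_insert_of_notMem hmem, pow_succ]
    ring
  · rw [if_neg h, if_neg h, one_mul]

end BigModule
section BigIdent

open Finsupp

variable {V : Type*} [LinearOrder V] (K : Type*) [Field K]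

lemma erase_sum_eq (S : Finset V) (f : V → V → (Finset V →₀ K)) :
    ∑ x ∈ S, ∑ y ∈ S.erase x, f x y
      = ∑ p ∈ S ×ˢ S, if p.2 ≠ p.1 then f p.1 p.2 else 0 := by
  have h1 : ∀ x ∈ S, ∑ y ∈ S.erase x, f x y = ∑ y ∈ S, if y ≠ x then f x y else 0 := by
    intro x _
    rw [← Finset.filter_ne' S x, Finset.sum_filter]
  rw [Finset.sum_congr rfl h1, ← Finset.sum_product']

lemma bigBd_bdAux (S : Finset V) : bigBd K (bdAux K S) = 0 := by
  rw [bdAux, map_sum]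
  have h1 : ∀ x ∈ S, bigBd K (Finsupp.single (S.erase x) (sgn K S x))
      = ∑ y ∈ S.erase x,
          Finsupp.single ((S.erase x).erase y) (sgn K S x * sgn K (S.erase x) y) := by
    intro x _
    rw [bigBd_single, bdAux, Finset.smul_sum]
    exact Finset.sum_congr rfl fun y _ => by rw [Finsupp.smul_single, smul_eq_mul]
  rw [Finset.sum_congr rfl h1, erase_sum_eq]
  apply Finset.sum_involution (fun p _ => p.swap)
  · intro p hp
    rcases p with ⟨x, y⟩
    by_cases hxy : y = x
    · simp [hxy]
    · have hx : x ∈ S := (Finset.mem_product.mp hp).1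
      have hy : y ∈ S := (Finset.mem_product.mp hp).2
      simp only [Prod.swap, ne_eq]
      rw [if_pos hxy, if_pos (Ne.symm hxy)]
      have he : (S.erase y).erase x = (S.erase x).erase y := by
        ext a; simp only [Finset.mem_erase]; tauto
      rw [he, ← Finsupp.single_add, sgn_erase K hx y, sgn_erase K hy x]
      have hco : sgn K S x * ((if x < y then (-1 : K) else 1) * sgn K S y)
          + sgn K S y * ((if y < x then (-1 : K) else 1) * sgn K S x) = 0 := by
        rcases (Ne.symm hxy : x ≠ y).lt_or_gt with hlt | hlt
        · rw [if_pos hlt, if_neg (not_lt.mpr hlt.le)]; ring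
        · rw [if_neg (not_lt.mpr hlt.le), if_pos hlt]; ring
      rw [hco, Finsupp.single_zero]
  · intro p hp hne hc
    apply hne
    have h2 : p.2 = p.1 := congrArg Prod.fst hc
    simp [h2]
  · intro p hp
    try simp only [Finset.mem_product, Prod.fst_swap, Prod.snd_swap] at hp ⊢
    first
    | exact ⟨hp.2, hp.1⟩
    | simp
  · intro p hp
    try simp only [Finset.mem_product, Prod.fst_swap, Prod.snd_swap] at hp ⊢
    first
    | exact ⟨hp.2, hp.1⟩
    | simp

lemma bigBd_bigBd (f : Finset V →₀ K) : bigBd K (bigBd K f) = 0 := by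
  have h : (bigBd K (V := V)).comp (bigBd K) = 0 := by
    apply Finsupp.lhom_ext
    intro S c
    simp only [LinearMap.comp_apply, LinearMap.zero_apply, bigBd_single, map_smul,
      bigBd_bdAux, smul_zero]
  exact DFunLike.congr_fun h f

end BigIdent
section ConeIdent

open Finsupp

variable {V : Type*} [LinearOrder V] (K : Type*) [Field K]

lemma coneB_ident (v : V) (f : Finset V →₀ K) :
    bigBd K (coneB K v f) + coneB K v (bigBd K f) = f := by
  have h : (bigBd K).comp (coneB K v) + (coneB K v).comp (bigBd K)
      = LinearMap.id (R := K) (M := Finset V →₀ K) := by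
    apply Finsupp.lhom_ext
    intro S c
    simp only [LinearMap.add_apply, LinearMap.comp_apply, LinearMap.id_apply]
    by_cases hv : v ∈ S
    · -- cone part is zero; second part gives back the single
      rw [coneB_single, coneAux, if_pos hv, smul_zero, map_zero, zero_add, bigBd_single,
        map_smul, bdAux, map_sum]
      have h1 : ∀ x ∈ S, coneB K v (Finsupp.single (S.erase x) (sgn K S x))
          = if x = v then Finsupp.single S 1 else 0 := by
        intro x hx
        rw [coneB_single, coneAux]
        by_cases hxv : x = v
        · subst hxv
          rw [if_neg (Finset.notMem_erase x S), if_pos rfl, Finset.insert_erase hv,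
            Finsupp.smul_single, smul_eq_mul, sgn_erase K hv, if_neg (lt_irrefl x), one_mul,
            sgn_mul_self]
        · rw [if_pos (Finset.mem_erase.mpr ⟨Ne.symm hxv, hv⟩), smul_zero, if_neg hxv]
      rw [Finset.sum_congr rfl h1, Finset.sum_ite_eq' S v (fun _ => Finsupp.single S 1),
        if_pos hv, Finsupp.smul_single, smul_eq_mul, mul_one]
    · -- v ∉ S
      have hL1 : bigBd K (coneB K v (Finsupp.single S c))
          = Finsupp.single S c + ∑ x ∈ S,
              Finsupp.single (insert v (S.erase x)) (c * sgn K S v * sgn K (insert v S) x) := by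
        rw [coneB_single, coneAux, if_neg hv, Finsupp.smul_single, smul_eq_mul, bigBd_single,
          bdAux, Finset.sum_insert hv, smul_add, Finset.smul_sum]
        congr 1
        · rw [Finset.erase_insert hv, Finsupp.smul_single, smul_eq_mul, sgn_insert K hv,
            if_neg (lt_irrefl v), one_mul, mul_assoc, sgn_mul_self, mul_one]
        · refine Finset.sum_congr rfl fun x hx => ?_
          have hxv : v ≠ x := fun h => hv (h ▸ hx)
          rw [Finset.erase_insert_of_ne hxv, Finsupp.smul_single, smul_eq_mul]
      have hL2 : coneB K v (bigBd K (Finsupp.single S c))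
          = ∑ x ∈ S,
              Finsupp.single (insert v (S.erase x)) (c * sgn K S x * sgn K (S.erase x) v) := by
        rw [bigBd_single, map_smul, bdAux, map_sum, Finset.smul_sum]
        refine Finset.sum_congr rfl fun x hx => ?_
        have hvx : v ∉ S.erase x := fun h => hv (Finset.mem_of_mem_erase h)
        rw [coneB_single, coneAux, if_neg hvx, Finsupp.smul_single, Finsupp.smul_single,
          smul_eq_mul, smul_eq_mul, ← mul_assoc]
      rw [hL1, hL2, add_assoc, ← Finset.sum_add_distrib]
      have h3 : ∀ x ∈ S,
          Finsupp.single (insert v (S.erase x)) (c * sgn K S v * sgn K (insert v S) x)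
            + Finsupp.single (insert v (S.erase x)) (c * sgn K S x * sgn K (S.erase x) v)
          = 0 := by
        intro x hx
        have hxv : x ≠ v := fun h => hv (h ▸ hx)
        rw [← Finsupp.single_add, sgn_insert K hv x, sgn_erase K hx v]
        have hco : c * sgn K S v * ((if v < x then (-1:K) else 1) * sgn K S x)
            + c * sgn K S x * ((if x < v then (-1:K) else 1) * sgn K S v) = 0 := by
          rcases hxv.lt_or_gt with hlt | hlt
          · rw [if_pos hlt, if_neg (not_lt.mpr hlt.le)]; ring
          · rw [if_neg (not_lt.mpr hlt.le), if_pos hlt]; ring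
        rw [hco, Finsupp.single_zero]
      rw [Finset.sum_congr rfl h3, Finset.sum_const_zero, add_zero]
  exact DFunLike.congr_fun h f

end ConeIdent
section Transfer

open Finsupp

variable {V : Type*} [LinearOrder V] (E : SComplex V) (K : Type*) [Field K]

noncomputable def toBig (i : ℤ) : E.Chains K i →ₗ[K] (Finset V →₀ K) :=
  Finsupp.lmapDomain K K (fun σ => σ.1)

lemma toBig_injective (i : ℤ) : Function.Injective (toBig E K i) :=
  Finsupp.mapDomain_injective fun σ τ h => Subtype.ext h

lemma toBig_single (i : ℤ) (σ : E.Face i) (c : K) :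
    toBig E K i (Finsupp.single σ c) = Finsupp.single σ.1 c := by
  simp [toBig]

lemma boundary_single (i : ℤ) (σ : E.Face i) (c : K) :
    E.boundary K i (Finsupp.single σ c) = c • E.bd K σ := by
  simp [SComplex.boundary]

lemma toBig_boundary (i : ℤ) (z : E.Chains K i) :
    toBig E K (i-1) (E.boundary K i z) = bigBd K (toBig E K i z) := by
  have h : (toBig E K (i-1)).comp (E.boundary K i) = (bigBd K).comp (toBig E K i) := by
    apply Finsupp.lhom_ext
    intro σ c
    simp only [LinearMap.comp_apply, boundary_single, map_smul, toBig_single, bigBd_single]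
    congr 1
    rw [SComplex.bd, map_sum, bdAux]
    rw [← Finset.sum_attach σ.1 (fun x => Finsupp.single (σ.1.erase x) (sgn K σ.1 x))]
    exact Finset.sum_congr rfl fun x _ => by exact toBig_single E K (i-1) _ _
  exact DFunLike.congr_fun h z

lemma toBig_chainsCast {i j : ℤ} (h : i = j) (z : E.Chains K i) :
    toBig E K j (E.chainsCast K h z) = toBig E K i z := by
  subst h; rfl

lemma boundary_boundary (i : ℤ) (z : E.Chains K i) :
    E.boundary K (i-1) (E.boundary K i z) = 0 := by
  apply toBig_injective E K (i-1-1)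
  rw [toBig_boundary, toBig_boundary, bigBd_bigBd, map_zero]

/-- The submodule of chains supported on faces satisfying `P`. -/
noncomputable def MM (P : Finset V → Prop) (i : ℤ) : Submodule K (E.Chains K i) :=
  Finsupp.supported K K {σ : E.Face i | P σ.1}

lemma single_mem_MM {P : Finset V → Prop} {i : ℤ} {σ : E.Face i} (h : P σ.1) (c : K) :
    Finsupp.single σ c ∈ MM E K P i :=
  Finsupp.single_mem_supported K c h

lemma mem_MM_iff {P : Finset V → Prop} {i : ℤ} {z : E.Chains K i} :
    z ∈ MM E K P i ↔ ∀ σ ∈ z.support, P σ.1 := by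
  rw [MM, Finsupp.mem_supported]
  constructor
  · intro h σ hσ; exact h hσ
  · intro h σ hσ; exact h σ hσ

lemma MM_mono {P Q : Finset V → Prop} (h : ∀ F, P F → Q F) (i : ℤ) :
    MM E K P i ≤ MM E K Q i :=
  Finsupp.supported_mono fun σ hσ => h σ.1 hσ

lemma MM_inter_mem {P Q : Finset V → Prop} {i : ℤ} {z : E.Chains K i}
    (hP : z ∈ MM E K P i) (hQ : z ∈ MM E K Q i) : z ∈ MM E K (fun F => P F ∧ Q F) i := by
  rw [mem_MM_iff] at *
  exact fun σ hσ => ⟨hP σ hσ, hQ σ hσ⟩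

lemma MM_induction (P : Finset V → Prop) (i : ℤ) {p : E.Chains K i → Prop}
    (h0 : p 0) (hadd : ∀ a b, p a → p b → p (a + b))
    (hsmul : ∀ (c : K) a, p a → p (c • a))
    (hsingle : ∀ σ : E.Face i, P σ.1 → p (Finsupp.single σ 1)) :
    ∀ z ∈ MM E K P i, p z := by
  intro z hz
  rw [MM, Finsupp.supported_eq_span_single] at hz
  induction hz using Submodule.span_induction with
  | mem x hx => obtain ⟨σ, hσ, rfl⟩ := hx; exact hsingle σ hσ
  | zero => exact h0
  | add a b _ _ pa pb => exact hadd a b pa pb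
  | smul c a _ pa => exact hsmul c a pa

lemma chainsCast_mem_MM {P : Finset V → Prop} {i j : ℤ} (h : i = j) {z : E.Chains K i}
    (hz : z ∈ MM E K P i) : E.chainsCast K h z ∈ MM E K P j := by
  subst h; exact hz

lemma boundary_mem_MM {P : Finset V → Prop} (hPd : ∀ σ τ, P σ → τ ⊆ σ → P τ) (i : ℤ)
    {z : E.Chains K i} (hz : z ∈ MM E K P i) :
    E.boundary K i z ∈ MM E K P (i-1) := by
  refine MM_induction E K P i (p := fun z => E.boundary K i z ∈ MM E K P (i-1)) ?_ ?_ ?_ ?_ z hz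
  · simp only [map_zero]; exact zero_mem _
  · intro a b pa pb; simp only [map_add]; exact add_mem pa pb
  · intro c a pa; simp only [map_smul]; exact Submodule.smul_mem _ c pa
  · intro σ hσ
    rw [boundary_single, one_smul, SComplex.bd]
    refine sum_mem fun x _ => single_mem_MM E K ?_ _
    exact hPd σ.1 _ hσ (Finset.erase_subset _ _)

/-- A predicate defining a subcomplex of `E`. -/
def IsSub (P : Finset V → Prop) : Prop :=
  P ∅ ∧ (∀ σ τ : Finset V, P σ → τ ⊆ σ → P τ) ∧ ∀ σ, P σ → σ ∈ E.faces

/-- Acyclicity (vanishing reduced homology, witnessed degreewise) of the subcomplex `P`. -/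
def Acy (P : Finset V → Prop) : Prop :=
  ∀ (i : ℤ) (z : E.Chains K i), z ∈ MM E K P i → E.boundary K i z = 0 →
    ∃ w ∈ MM E K P (i+1),
      E.chainsCast K (show i + 1 - 1 = i by ring) (E.boundary K (i+1) w) = z

lemma Acy_congr {P Q : Finset V → Prop} (h : ∀ F, P F ↔ Q F) (hP : Acy E K P) :
    Acy E K Q := by
  have : P = Q := funext fun F => propext (h F)
  rwa [← this]

end Transfer
section ConeLemma

open Finsupp

variable {V : Type*} [LinearOrder V] (E : SComplex V) (K : Type*) [Field K]

open Classical in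
noncomputable def coneFace (v : V) (i : ℤ) (σ : E.Face i) : E.Chains K (i+1) :=
  if h : v ∉ σ.1 ∧ insert v σ.1 ∈ E.faces then
    Finsupp.single
      ⟨insert v σ.1, h.2, by
        have hc := σ.2.2
        rw [Finset.card_insert_of_notMem h.1]
        push_cast
        omega⟩
      (sgn K σ.1 v)
  else 0

noncomputable def coneMap (v : V) (i : ℤ) : E.Chains K i →ₗ[K] E.Chains K (i+1) :=
  Finsupp.lsum K fun σ => LinearMap.toSpanSingleton K _ (coneFace E K v i σ)

lemma coneMap_single (v : V) (i : ℤ) (σ : E.Face i) (c : K) :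
    coneMap E K v i (Finsupp.single σ c) = c • coneFace E K v i σ := by
  simp [coneMap]

lemma Acy_cone (P : Finset V → Prop) (hsub : IsSub E P) (v : V)
    (hv : ∀ F, P F → P (insert v F)) : Acy E K P := by
  classical
  intro i z hz hbz
  have hmem : coneMap E K v i z ∈ MM E K P (i+1) := by
    refine MM_induction E K P i (p := fun z => coneMap E K v i z ∈ MM E K P (i+1))
      ?_ ?_ ?_ ?_ z hz
    · simp only [map_zero]; exact zero_mem _
    · intro a b pa pb; simp only [map_add]; exact add_mem pa pb
    · intro c a pa; simp only [map_smul]; exact Submodule.smul_mem _ c pa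
    · intro σ hσ
      rw [coneMap_single, one_smul, coneFace]
      by_cases h : v ∉ σ.1 ∧ insert v σ.1 ∈ E.faces
      · rw [dif_pos h]
        exact single_mem_MM E K (hv σ.1 hσ) _
      · rw [dif_neg h]
        exact zero_mem _
  have hcompat : toBig E K (i+1) (coneMap E K v i z) = coneB K v (toBig E K i z) := by
    refine MM_induction E K P i
      (p := fun z => toBig E K (i+1) (coneMap E K v i z) = coneB K v (toBig E K i z))
      ?_ ?_ ?_ ?_ z hz
    · simp only [map_zero]
    · intro a b pa pb; simp only [map_add, pa, pb]
    · intro c a pa; simp only [map_smul, pa]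
    · intro σ hσ
      rw [coneMap_single, one_smul, toBig_single, coneB_single, one_smul, coneFace, coneAux]
      by_cases hvσ : v ∈ σ.1
      · rw [dif_neg (fun hc => hc.1 hvσ), if_pos hvσ, map_zero]
      · have hin : insert v σ.1 ∈ E.faces := hsub.2.2 _ (hv σ.1 hσ)
        rw [dif_pos (show v ∉ σ.1 ∧ insert v σ.1 ∈ E.faces from ⟨hvσ, hin⟩), if_neg hvσ]
        exact toBig_single E K (i+1) _ _
  refine ⟨coneMap E K v i z, hmem, ?_⟩
  apply toBig_injective E K i
  rw [toBig_chainsCast, toBig_boundary, hcompat]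
  have hident := coneB_ident K v (toBig E K i z)
  have hz0 : bigBd K (toBig E K i z) = 0 := by
    rw [← toBig_boundary, hbz, map_zero]
  rw [hz0, map_zero, add_zero] at hident
  exact hident

end ConeLemma
section UnionLemma

open Finsupp

variable {V : Type*} [LinearOrder V] (E : SComplex V) (K : Type*) [Field K]

lemma Acy_union {P Q : Finset V → Prop}
    (hPd : ∀ σ τ : Finset V, P σ → τ ⊆ σ → P τ)
    (hQd : ∀ σ τ : Finset V, Q σ → τ ⊆ σ → Q τ)
    (hP : Acy E K P) (hQ : Acy E K Q) (hPQ : Acy E K (fun F => P F ∧ Q F)) :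
    Acy E K (fun F => P F ∨ Q F) := by
  classical
  intro i z hz hbz
  set a : E.Chains K i := z.filter (fun σ => P σ.1) with ha
  set b : E.Chains K i := z - a with hb
  have hab : a + b = z := by rw [hb]; abel
  have haP : a ∈ MM E K P i := by
    rw [mem_MM_iff]
    intro σ hσ
    rw [ha] at hσ
    rw [Finsupp.support_filter, Finset.mem_filter] at hσ
    exact hσ.2
  have hbQ : b ∈ MM E K Q i := by
    rw [mem_MM_iff]
    intro σ hσ
    have hbne : b σ ≠ 0 := Finsupp.mem_support_iff.mp hσ
    have hfil : a σ = if P σ.1 then z σ else 0 := by rw [ha, Finsupp.filter_apply]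
    by_cases hp : P σ.1
    · exfalso; apply hbne; rw [hb, Finsupp.sub_apply, hfil, if_pos hp, sub_self]
    · have hzσ : z σ ≠ 0 := by
        intro hzz
        apply hbne
        rw [hb, Finsupp.sub_apply, hfil, if_neg hp, hzz, sub_zero]
      have := (mem_MM_iff E K).mp hz σ (Finsupp.mem_support_iff.mpr hzσ)
      tauto
  have hdab : E.boundary K i a + E.boundary K i b = 0 := by
    rw [← map_add, hab, hbz]
  have hdaP : E.boundary K i a ∈ MM E K P (i-1) := boundary_mem_MM E K hPd i haP
  have hdaQ : E.boundary K i a ∈ MM E K Q (i-1) := by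
    have heq : E.boundary K i a = -(E.boundary K i b) := eq_neg_of_add_eq_zero_left hdab
    rw [heq]
    exact (MM E K Q (i-1)).neg_mem (boundary_mem_MM E K hQd i hbQ)
  obtain ⟨w, hwmem, hweq⟩ := hPQ (i-1) (E.boundary K i a)
    (MM_inter_mem E K hdaP hdaQ) (boundary_boundary E K i a)
  set c : E.Chains K i := E.chainsCast K (show i - 1 + 1 = i by ring) w with hc
  have hcmem : c ∈ MM E K (fun F => P F ∧ Q F) i := chainsCast_mem_MM E K _ hwmem
  have hdc : E.boundary K i c = E.boundary K i a := by
    apply toBig_injective E K (i-1)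
    rw [toBig_boundary, hc, toBig_chainsCast, ← hweq, toBig_chainsCast, toBig_boundary]
  obtain ⟨x, hxmem, hxe⟩ := hP i (a - c)
    (sub_mem haP (MM_mono E K (fun F h => h.1) i hcmem))
    (by rw [map_sub, hdc, sub_self])
  obtain ⟨y, hymem, hye⟩ := hQ i (b + c)
    (add_mem hbQ (MM_mono E K (fun F h => h.2) i hcmem))
    (by rw [map_add, hdc, add_comm]; exact hdab)
  refine ⟨x + y, add_mem (MM_mono E K (fun F h => Or.inl h) (i+1) hxmem)
    (MM_mono E K (fun F h => Or.inr h) (i+1) hymem), ?_⟩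
  rw [map_add, map_add, hxe, hye]
  rw [← hab]; abel

end UnionLemma
lemma subQuot_subsingleton {K : Type*} [Field K] {C : Type*} [AddCommGroup C] [Module K C]
    (S : Submodule K C) (T : Submodule K ↥S) (h : ∀ x : ↥S, x ∈ T) :
    Subsingleton (SubQuot S T) := by
  have hT : T = ⊤ := Submodule.eq_top_iff'.mpr h
  have : Subsingleton (↥S ⧸ T) := Submodule.Quotient.subsingleton_iff.mpr hT
  exact this

/-- Proposition 4.4(4).  Let `l < m` with `s = m mod l` and
`t = (m-s)/l ≥ 2`.  Let `Γ` be a disjoint union of runs (for parameters `m, l`) of lengths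
`s₁, ..., s_r`, let `E = E(s₁, ..., s_r)` be the complement complex of `Γ` inside its vertex
set, and write `s_j = p_j (t+1) + d_j` with `p_j ≥ 0`, `0 ≤ d_j ≤ t`.  If `d_j ∉ {1, 2}` for
some `j`, then `H̃ᵢ(E) = 0` for all `i`.  The `j`-th run (of length `sl j ≥ 1`) is realised
on the vertex block `[o j, o (j+1))` of `ℕ` with facets
`G j i = {o j + i*l, ..., o j + i*l + m - 1}`, `0 ≤ i < sl j`. -/
theorem runs_complement_homology_vanishing
    (K : Type*) [Field K] (l m s t : ℕ)
    (hl : 0 < l) (hlm : l < m)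
    (hs : s = m % l) (ht : t = (m - s) / l) (ht2 : 2 ≤ t)
    (r : ℕ) (hr : 1 ≤ r) (sl : ℕ → ℕ) (hsl : ∀ j < r, 1 ≤ sl j)
    (p d : ℕ → ℕ) (hpd : ∀ j < r, sl j = p j * (t + 1) + d j ∧ d j ≤ t)
    (j₀ : ℕ) (hj₀ : j₀ < r) (hd1 : d j₀ ≠ 1) (hd2 : d j₀ ≠ 2)
    (o : ℕ → ℕ) (ho0 : o 0 = 0) (ho : ∀ j, o (j + 1) = o j + (sl j - 1) * l + m)
    (G : ℕ → ℕ → Finset ℕ)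
    (hG : ∀ j i, G j i = (Finset.range m).image fun q => o j + i * l + q)
    (E : SComplex ℕ)
    (hE : E = SComplex.ofFacets
      {A | ∃ j < r, ∃ i < sl j, A = Finset.range (o r) \ G j i}) :
    ∀ i : ℤ, Subsingleton (E.reducedHomology K i) := by
  classical
  -- ## arithmetic setup
  have hs' : s < l := by rw [hs]; exact Nat.mod_lt m hl
  have hml : m = t * l + s := by
    have h1 := Nat.mod_add_div' m l
    have h2 : m - s = m / l * l := by omega
    have h3 : t = m / l := by rw [ht, h2]; exact Nat.mul_div_cancel _ hl
    rw [h3, hs]; omega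
  have hsl0 : 1 ≤ sl j₀ := hsl j₀ hj₀
  obtain ⟨sm, hsm⟩ : ∃ sm, sl j₀ = sm + 1 := ⟨sl j₀ - 1, by omega⟩
  set b := o j₀ with hbdef
  set nend := o (j₀ + 1) with hnenddef
  have hnend : nend = b + sm * l + m := by rw [hnenddef, ho j₀, hsm]; simp [hbdef]
  set Bk := Finset.Ico b nend with hBkdef
  have homono : Monotone o := monotone_nat_of_le_succ (fun j => by rw [ho j]; omega)
  have hGIco : ∀ j i, G j i = Finset.Ico (o j + i * l) (o j + i * l + m) := by
    intro j i
    rw [hG]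
    ext x
    simp only [Finset.mem_image, Finset.mem_range, Finset.mem_Ico]
    constructor
    · rintro ⟨q, hq, rfl⟩; omega
    · intro hx; exact ⟨x - (o j + i * l), by omega, by omega⟩
  have hWBk : ∀ i, i < sl j₀ → Finset.Ico (b + i * l) (b + i * l + m) ⊆ Bk := by
    intro i hi x hx
    have h2 : i * l ≤ sm * l := Nat.mul_le_mul_right l (by omega)
    simp only [hBkdef, Finset.mem_Ico] at *
    omega
  have hBkRange : Bk ⊆ Finset.range (o r) := by
    intro x hx
    have h2 : nend ≤ o r := homono (by omega : j₀ + 1 ≤ r)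
    simp only [hBkdef, Finset.mem_Ico, Finset.mem_range] at *
    omega
  have hGdisj : ∀ j, j < r → j ≠ j₀ → ∀ i, i < sl j → Disjoint (G j i) Bk := by
    intro j hjr hjne i hij
    rw [hGIco, hBkdef, Finset.disjoint_left]
    intro x hx hx2
    simp only [Finset.mem_Ico] at hx hx2
    have hGup : o j + i * l + m ≤ o (j + 1) := by
      rw [ho j]
      have h2 : i * l ≤ (sl j - 1) * l := Nat.mul_le_mul_right l (by omega)
      omega
    rcases lt_or_gt_of_ne hjne with hlt | hlt
    · have : o (j + 1) ≤ b := homono hlt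
      omega
    · have : nend ≤ o j := homono hlt
      omega
  have hEfaces : ∀ (F : Finset ℕ), F ⊆ Finset.range (o r) →
      ∀ jj ii, jj < r → ii < sl jj → Disjoint F (G jj ii) → F ∈ E.faces := by
    intro F hFr jj ii hjj hii hdisj
    rw [hE]
    exact Or.inr ⟨Finset.range (o r) \ G jj ii, ⟨jj, hjj, ii, hii, rfl⟩,
      Finset.subset_sdiff.mpr ⟨hFr, hdisj⟩⟩
  have hEP : ∀ F : Finset ℕ, F ∈ E.faces ↔
      (F ⊆ Finset.range (o r) ∧ ∃ jj, jj < r ∧ ∃ ii, ii < sl jj ∧ Disjoint F (G jj ii)) := by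
    intro F
    constructor
    · intro hF
      rw [hE] at hF
      rcases hF with rfl | ⟨A, ⟨jj, hjj, ii, hii, rfl⟩, hsub⟩
      · exact ⟨Finset.empty_subset _, j₀, hj₀, 0, by omega, Finset.disjoint_empty_left _⟩
      · rw [Finset.subset_sdiff] at hsub
        exact ⟨hsub.1, jj, hjj, ii, hii, hsub.2⟩
    · rintro ⟨hFr, jj, hjj, ii, hii, hdisj⟩
      exact hEfaces F hFr jj ii hjj hii hdisj
  -- ## the master induction on a single run with passenger predicate Q
  have master : ∀ (Q : Finset ℕ → Prop), Q ∅ → (∀ σ τ : Finset ℕ, Q σ → τ ⊆ σ → Q τ) →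
      (∀ σ : Finset ℕ, Q σ → σ ⊆ Finset.range (o r) \ Bk) →
      ∀ (n' i₀ u : ℕ), i₀ + n' = sl j₀ → 1 ≤ n' → u ≤ s → (∃ q, n' = q * (t + 1) + d j₀) →
      Acy E K (fun F => Q (F \ Bk) ∧ (F ∩ Bk ⊆ Finset.Ico (b + i₀ * l + u) nend) ∧
        ∃ i, i₀ ≤ i ∧ i < sl j₀ ∧
          Disjoint (F ∩ Bk) (Finset.Ico (b + i * l) (b + i * l + m))) := by
    intro Q hQ0 hQd hQr
    have hQFr : ∀ F : Finset ℕ, Q (F \ Bk) → F ⊆ Finset.range (o r) := by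
      intro F hq x hx
      by_cases hxBk : x ∈ Bk
      · exact hBkRange hxBk
      · exact (Finset.mem_sdiff.mp (hQr _ hq (Finset.mem_sdiff.mpr ⟨hx, hxBk⟩))).1
    -- the two shapes of subcomplexes occurring in the induction
    set S1 : ℕ → Finset ℕ → Prop :=
      fun lo F => Q (F \ Bk) ∧ F ∩ Bk ⊆ Finset.Ico lo nend with hS1def
    set SS : ℕ → ℕ → Finset ℕ → Prop := fun lo i₁ F =>
      Q (F \ Bk) ∧ F ∩ Bk ⊆ Finset.Ico lo nend ∧
        ∃ i, i₁ ≤ i ∧ i < sl j₀ ∧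
          Disjoint (F ∩ Bk) (Finset.Ico (b + i * l) (b + i * l + m)) with hSSdef
    -- downward closure of the two shapes
    have hD1 : ∀ lo, ∀ σ τ : Finset ℕ, S1 lo σ → τ ⊆ σ → S1 lo τ := by
      rintro lo σ τ ⟨hq, hsub⟩ hts
      exact ⟨hQd _ _ hq (Finset.sdiff_subset_sdiff hts (Finset.Subset.refl _)),
        (Finset.inter_subset_inter hts (Finset.Subset.refl _)).trans hsub⟩
    have hD2 : ∀ lo i₁, ∀ σ τ : Finset ℕ, SS lo i₁ σ → τ ⊆ σ → SS lo i₁ τ := by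
      rintro lo i₁ σ τ ⟨hq, hsub, i, hi1, hi2, hd⟩ hts
      exact ⟨hQd _ _ hq (Finset.sdiff_subset_sdiff hts (Finset.Subset.refl _)),
        (Finset.inter_subset_inter hts (Finset.Subset.refl _)).trans hsub, i, hi1, hi2,
        Finset.disjoint_of_subset_left (Finset.inter_subset_inter hts (Finset.Subset.refl _)) hd⟩
    -- faces of `E`
    have hfc : ∀ (F : Finset ℕ) (i : ℕ), i < sl j₀ → Q (F \ Bk) →
        Disjoint (F ∩ Bk) (Finset.Ico (b + i * l) (b + i * l + m)) → F ∈ E.faces := by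
      intro F i hi hq hd
      refine hEfaces F (hQFr F hq) j₀ i hj₀ hi ?_
      rw [hGIco, Finset.disjoint_left]
      intro x hxF hxW
      have hxBk : x ∈ Bk := hWBk i hi hxW
      exact Finset.disjoint_left.mp hd (Finset.mem_inter.mpr ⟨hxF, hxBk⟩) hxW
    -- `S1 lo` is a cone with apex `lo`
    have hS1acy : ∀ lo : ℕ, b ≤ lo → lo < nend →
        (∃ i, i < sl j₀ ∧ b + i * l + m ≤ lo) → Acy E K (S1 lo) := by
      rintro lo hblo hlon ⟨iw, hiw, hiwlo⟩
      have hloBk : lo ∈ Bk := by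
        simp only [hBkdef, Finset.mem_Ico]; omega
      have hdj : ∀ F : Finset ℕ, F ∩ Bk ⊆ Finset.Ico lo nend →
          Disjoint (F ∩ Bk) (Finset.Ico (b + iw * l) (b + iw * l + m)) := by
        intro F hsub
        rw [Finset.disjoint_left]
        intro x hx hxW
        have h1 := hsub hx
        simp only [Finset.mem_Ico] at h1 hxW
        omega
      refine Acy_cone E K (S1 lo) ⟨?_, hD1 lo, ?_⟩ lo ?_
      · constructor
        · rwa [Finset.empty_sdiff]
        · simp
      · rintro σ ⟨hq, hsub⟩
        exact hfc σ iw hiw hq (hdj σ hsub)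
      · rintro F ⟨hq, hsub⟩
        constructor
        · rwa [Finset.insert_sdiff_of_mem _ hloBk]
        · rw [Finset.insert_inter_of_mem hloBk]
          exact Finset.insert_subset (Finset.mem_Ico.mpr ⟨le_rfl, hlon⟩) hsub
    -- `SS lo i₁` is a cone with apex `lo` whenever `lo < b + i₁ * l`
    have hSSacy : ∀ lo i₁ : ℕ, b ≤ lo → lo < nend → i₁ < sl j₀ → lo < b + i₁ * l →
        Acy E K (SS lo i₁) := by
      intro lo i₁ hblo hlon hi₁ hlt
      have hloBk : lo ∈ Bk := by
        simp only [hBkdef, Finset.mem_Ico]; omega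
      refine Acy_cone E K (SS lo i₁) ⟨?_, hD2 lo i₁, ?_⟩ lo ?_
      · refine ⟨by rwa [Finset.empty_sdiff], by simp, i₁, le_rfl, hi₁, ?_⟩
        simp
      · rintro σ ⟨hq, hsub, i, hi1, hi2, hd⟩
        exact hfc σ i hi2 hq hd
      · rintro F ⟨hq, hsub, i, hi1, hi2, hd⟩
        have hmul : i₁ * l ≤ i * l := Nat.mul_le_mul_right l hi1
        refine ⟨by rwa [Finset.insert_sdiff_of_mem _ hloBk], ?_, i, hi1, hi2, ?_⟩
        · rw [Finset.insert_inter_of_mem hloBk]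
          exact Finset.insert_subset (Finset.mem_Ico.mpr ⟨le_rfl, hlon⟩) hsub
        · rw [Finset.insert_inter_of_mem hloBk, Finset.disjoint_left]
          intro x hx hxW
          rcases Finset.mem_insert.mp hx with rfl | hx'
          · simp only [Finset.mem_Ico] at hxW
            omega
          · exact Finset.disjoint_left.mp hd hx' hxW
    -- the induction
    intro n'
    induction n' using Nat.strong_induction_on with
    | _ n' IH =>
      intro i₀ u hisum hn1 hus hcond
      have hd0 : d j₀ ≤ t := (hpd j₀ hj₀).2
      obtain ⟨q, hq⟩ := hcond
      have hn3 : 3 ≤ n' := by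
        rcases q with _ | q'
        · simp only [Nat.zero_mul, Nat.zero_add] at hq
          omega
        · have hexp : (q' + 1) * (t + 1) = q' * (t + 1) + (t + 1) := by ring
          omega
      have hi₀ : i₀ < sl j₀ := by omega
      have hi₀1 : i₀ + 1 < sl j₀ := by omega
      have hP1 : (i₀ + 1) * l = i₀ * l + l := by ring
      have hPt : (i₀ + t + 1) * l = i₀ * l + t * l + l := by ring
      have hsm2 : i₀ + 1 ≤ sm := by omega
      have hmul1 : (i₀ + 1) * l ≤ sm * l := Nat.mul_le_mul_right l hsm2
      have hmul2 : (i₀ + 2) * l ≤ sm * l := Nat.mul_le_mul_right l (by omega)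
      have hP2 : (i₀ + 2) * l = i₀ * l + l + l := by ring
      -- `A`: the subcomplex avoiding window `i₀` entirely
      have hA : Acy E K (S1 (b + i₀ * l + m)) := by
        refine hS1acy _ (by omega) (by omega) ⟨i₀, hi₀, le_rfl⟩
      -- `B`: the subcomplex with a window among indices `> i₀`
      have hB : Acy E K (SS (b + i₀ * l + u) (i₀ + 1)) := by
        refine hSSacy _ _ (by omega) (by omega) hi₀1 (by omega)
      -- `U`: avoiding everything below window `i₀ + 1`
      have hU : Acy E K (S1 (b + (i₀ + 1) * l + m)) := by
        refine hS1acy _ (by omega) (by omega) ⟨i₀ + 1, hi₀1, le_rfl⟩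
      -- `C = A ∩ B`
      have hC : Acy E K (SS (b + i₀ * l + m) (i₀ + 1)) := by
        have hCU : ∀ F : Finset ℕ, S1 (b + (i₀ + 1) * l + m) F → SS (b + i₀ * l + m) (i₀ + 1) F := by
          rintro F ⟨hq', hsub⟩
          refine ⟨hq', hsub.trans (Finset.Ico_subset_Ico (by omega) le_rfl), i₀ + 1, le_rfl,
            hi₀1, ?_⟩
          rw [Finset.disjoint_left]
          intro x hx hxW
          have h1 := hsub hx
          simp only [Finset.mem_Ico] at h1 hxW
          omega
        have hUC : ∀ F : Finset ℕ, SS (b + i₀ * l + m) (i₀ + 1) F →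
            (∃ i, i₀ + 1 ≤ i ∧ i ≤ i₀ + t ∧ i < sl j₀ ∧
              Disjoint (F ∩ Bk) (Finset.Ico (b + i * l) (b + i * l + m))) →
            S1 (b + (i₀ + 1) * l + m) F := by
          rintro F ⟨hq', hsub, -⟩ ⟨i, hi1, hit, hi2, hd⟩
          refine ⟨hq', ?_⟩
          intro x hx
          have h1 := hsub hx
          have h2 := Finset.disjoint_left.mp hd hx
          have hmulA : i * l ≤ (i₀ + t) * l := Nat.mul_le_mul_right l hit
          have hmulB : (i₀ + 1) * l ≤ i * l := Nat.mul_le_mul_right l hi1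
          have hPit : (i₀ + t) * l = i₀ * l + t * l := by ring
          simp only [Finset.mem_Ico] at h1 h2 ⊢
          omega
        by_cases hbase : i₀ + t + 1 < sl j₀
        · -- inductive step: `C = U ∪ W`
          have hW : Acy E K (SS (b + i₀ * l + m) (i₀ + t + 1)) := by
            refine hSSacy _ _ (by omega) (by omega) hbase (by omega)
          have hIH : Acy E K (SS (b + (i₀ + t + 1) * l + s) (i₀ + t + 1)) := by
            have hnq : 1 ≤ q := by
              by_contra hq0
              have : q = 0 := by omega
              subst this
              simp only [Nat.zero_mul, Nat.zero_add] at hq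
              omega
            obtain ⟨q', rfl⟩ : ∃ q', q = q' + 1 := ⟨q - 1, by omega⟩
            have hexp : (q' + 1) * (t + 1) = q' * (t + 1) + (t + 1) := by ring
            exact IH (n' - (t + 1)) (by omega) (i₀ + t + 1) s (by omega) (by omega) le_rfl
              ⟨q', by omega⟩
          have hloeq : b + (i₀ + 1) * l + m = b + (i₀ + t + 1) * l + s := by omega
          have hUWint : Acy E K (fun F => S1 (b + (i₀ + 1) * l + m) F ∧
              SS (b + i₀ * l + m) (i₀ + t + 1) F) := by
            rw [hloeq] at hU ⊢
            refine Acy_congr E K (fun F => ?_) hIH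
            constructor
            · rintro ⟨hq', hsub, i, hi1, hi2, hd⟩
              exact ⟨⟨hq', hsub⟩, hq',
                hsub.trans (Finset.Ico_subset_Ico (by omega) le_rfl), i, hi1, hi2, hd⟩
            · rintro ⟨⟨hq', hsub⟩, _, _, i, hi1, hi2, hd⟩
              exact ⟨hq', hsub, i, hi1, hi2, hd⟩
          have hunion := Acy_union E K (hD1 _) (hD2 _ _) hU hW hUWint
          refine Acy_congr E K (fun F => ?_) hunion
          constructor
          · rintro (hF | hF)
            · exact hCU F hF
            · rcases hF with ⟨hq', hsub, i, hi1, hi2, hd⟩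
              exact ⟨hq', hsub.trans (Finset.Ico_subset_Ico (by omega) le_rfl), i,
                by omega, hi2, hd⟩
          · rintro ⟨hq', hsub, i, hi1, hi2, hd⟩
            by_cases hit : i ≤ i₀ + t
            · exact Or.inl (hUC F ⟨hq', hsub, i, hi1, hi2, hd⟩ ⟨i, hi1, hit, hi2, hd⟩)
            · exact Or.inr ⟨hq', hsub, i, by omega, hi2, hd⟩
        · -- base case: `C = U`
          refine Acy_congr E K (fun F => ?_) hU
          constructor
          · intro hF
            exact hCU F hF
          · rintro ⟨hq', hsub, i, hi1, hi2, hd⟩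
            exact hUC F ⟨hq', hsub, i, hi1, hi2, hd⟩ ⟨i, hi1, by omega, hi2, hd⟩
      -- assemble: the target is `A ∪ B`
      have hABint : Acy E K (fun F => S1 (b + i₀ * l + m) F ∧ SS (b + i₀ * l + u) (i₀ + 1) F) := by
        refine Acy_congr E K (fun F => ?_) hC
        constructor
        · rintro ⟨hq', hsub, i, hi1, hi2, hd⟩
          exact ⟨⟨hq', hsub⟩, hq',
            hsub.trans (Finset.Ico_subset_Ico (by omega) le_rfl), i, hi1, hi2, hd⟩
        · rintro ⟨⟨hq', hsub⟩, _, _, i, hi1, hi2, hd⟩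
          exact ⟨hq', hsub, i, hi1, hi2, hd⟩
      have hunion := Acy_union E K (hD1 _) (hD2 _ _) hA hB hABint
      refine Acy_congr E K (fun F => ?_) hunion
      constructor
      · rintro (⟨hq', hsub⟩ | ⟨hq', hsub, i, hi1, hi2, hd⟩)
        · refine ⟨hq', hsub.trans (Finset.Ico_subset_Ico (by omega) le_rfl), i₀, le_rfl,
            hi₀, ?_⟩
          rw [Finset.disjoint_left]
          intro x hx hxW
          have h1 := hsub hx
          simp only [Finset.mem_Ico] at h1 hxW
          omega
        · exact ⟨hq', hsub, i, by omega, hi2, hd⟩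
      · rintro ⟨hq', hsub, i, hi1, hi2, hd⟩
        by_cases hii : i = i₀
        · subst hii
          refine Or.inl ⟨hq', ?_⟩
          intro x hx
          have h1 := hsub hx
          have h2 := Finset.disjoint_left.mp hd hx
          simp only [Finset.mem_Ico] at h1 h2 ⊢
          omega
        · exact Or.inr ⟨hq', hsub, i, by omega, hi2, hd⟩
  -- ## assembling the top level
  have hmge : 2 ≤ m := by omega
  have hbnend : b < nend := by omega
  have hbrange : b < o r := by
    have h2 : nend ≤ o r := homono (by omega : j₀ + 1 ≤ r)
    omega
  -- nice form of the `j₀`-run complement with a passenger predicate `Q`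
  have hRunEq : ∀ (Q : Finset ℕ → Prop), (∀ σ : Finset ℕ, Q σ → σ ⊆ Finset.range (o r) \ Bk) →
      ∀ F : Finset ℕ,
      ((Q (F \ Bk) ∧ (F ∩ Bk ⊆ Finset.Ico (b + 0 * l + 0) nend) ∧
        ∃ i, 0 ≤ i ∧ i < sl j₀ ∧
          Disjoint (F ∩ Bk) (Finset.Ico (b + i * l) (b + i * l + m)))
      ↔ (Q (F \ Bk) ∧ ∃ ii, ii < sl j₀ ∧ Disjoint F (G j₀ ii))) := by
    intro Q hQr F
    constructor
    · rintro ⟨hq, hsub, i, _, hi, hdisj⟩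
      refine ⟨hq, i, hi, ?_⟩
      rw [hGIco, Finset.disjoint_left]
      intro x hxF hxW
      have hxBk : x ∈ Bk := hWBk i hi hxW
      exact (Finset.disjoint_left.mp hdisj) (Finset.mem_inter.mpr ⟨hxF, hxBk⟩) hxW
    · rintro ⟨hq, ii, hii, hdisj⟩
      refine ⟨hq, ?_, ii, Nat.zero_le _, hii, ?_⟩
      · intro x hx
        have := Finset.mem_inter.mp hx
        simp only [hBkdef, Finset.mem_Ico] at this ⊢
        omega
      · rw [hGIco] at hdisj
        exact Finset.disjoint_of_subset_left Finset.inter_subset_left hdisj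
  have hQsubrange : ∀ (Q : Finset ℕ → Prop), (∀ σ : Finset ℕ, Q σ → σ ⊆ Finset.range (o r) \ Bk) →
      ∀ F : Finset ℕ, Q (F \ Bk) → F ∩ Bk ⊆ Bk → F ⊆ Finset.range (o r) := by
    intro Q hQr F hq _ x hx
    by_cases hxBk : x ∈ Bk
    · exact hBkRange hxBk
    · have : x ∈ F \ Bk := Finset.mem_sdiff.mpr ⟨hx, hxBk⟩
      have := hQr _ hq this
      exact (Finset.mem_sdiff.mp this).1
  have hacy : Acy E K (fun F => F ∈ E.faces) := by
    -- the full passenger (no condition outside the block)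
    have hQf : ∀ σ : Finset ℕ, (σ ⊆ Finset.range (o r) \ Bk) → σ ⊆ Finset.range (o r) \ Bk :=
      fun σ h => h
    have hAtop : Acy E K (fun F => (F \ Bk ⊆ Finset.range (o r) \ Bk) ∧
        ∃ ii, ii < sl j₀ ∧ Disjoint F (G j₀ ii)) := by
      refine Acy_congr E K (hRunEq _ hQf) ?_
      exact master (fun σ => σ ⊆ Finset.range (o r) \ Bk) (Finset.empty_subset _)
        (fun σ τ hσ hτ => hτ.trans hσ) hQf
        (sl j₀) 0 0 (by omega) hsl0 (by omega) ⟨p j₀, (hpd j₀ hj₀).1⟩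
    have hPAeq : ∀ F : Finset ℕ, ((F \ Bk ⊆ Finset.range (o r) \ Bk) ∧
        ∃ ii, ii < sl j₀ ∧ Disjoint F (G j₀ ii))
        ↔ (F ⊆ Finset.range (o r) ∧ ∃ ii, ii < sl j₀ ∧ Disjoint F (G j₀ ii)) := by
      intro F
      constructor
      · rintro ⟨h1, hrest⟩
        refine ⟨?_, hrest⟩
        intro x hx
        by_cases hxBk : x ∈ Bk
        · exact hBkRange hxBk
        · exact (Finset.mem_sdiff.mp (h1 (Finset.mem_sdiff.mpr ⟨hx, hxBk⟩))).1
      · rintro ⟨h1, hrest⟩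
        exact ⟨fun x hx => Finset.mem_sdiff.mpr
          ⟨h1 (Finset.mem_sdiff.mp hx).1, (Finset.mem_sdiff.mp hx).2⟩, hrest⟩
    have hPA : Acy E K (fun F => F ⊆ Finset.range (o r) ∧
        ∃ ii, ii < sl j₀ ∧ Disjoint F (G j₀ ii)) := Acy_congr E K hPAeq hAtop
    have hPAd : ∀ σ τ : Finset ℕ, (σ ⊆ Finset.range (o r) ∧
        ∃ ii, ii < sl j₀ ∧ Disjoint σ (G j₀ ii)) → τ ⊆ σ →
        (τ ⊆ Finset.range (o r) ∧ ∃ ii, ii < sl j₀ ∧ Disjoint τ (G j₀ ii)) := by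
      rintro σ τ ⟨h1, ii, hii, hd⟩ hts
      exact ⟨hts.trans h1, ii, hii, Finset.disjoint_of_subset_left hts hd⟩
    by_cases hr2 : r = 1
    · -- only one run
      refine Acy_congr E K (fun F => ?_) hPA
      rw [hEP F]
      constructor
      · rintro ⟨h1, ii, hii, hd⟩
        exact ⟨h1, j₀, hj₀, ii, hii, hd⟩
      · rintro ⟨h1, jj, hjj, ii, hii, hd⟩
        have : jj = j₀ := by omega
        exact ⟨h1, ii, this ▸ hii, this ▸ hd⟩
    · -- at least two runs
      have hr2' : 2 ≤ r := by omega
      set jw : ℕ := if j₀ = 0 then 1 else 0 with hjw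
      have hjwr : jw < r := by rw [hjw]; split <;> omega
      have hjwne : jw ≠ j₀ := by rw [hjw]; split <;> omega
      have hjwsl : 0 < sl jw := hsl jw hjwr
      -- the other-runs predicate
      set PB : Finset ℕ → Prop := fun F => F ⊆ Finset.range (o r) ∧
        ∃ jj, jj < r ∧ jj ≠ j₀ ∧ ∃ ii, ii < sl jj ∧ Disjoint F (G jj ii) with hPBdef
      have hPBd : ∀ σ τ : Finset ℕ, PB σ → τ ⊆ σ → PB τ := by
        rintro σ τ ⟨h1, jj, hjj, hne, ii, hii, hd⟩ hts
        exact ⟨hts.trans h1, jj, hjj, hne, ii, hii, Finset.disjoint_of_subset_left hts hd⟩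
      have hbBk : b ∈ Bk := by
        simp only [hBkdef, Finset.mem_Ico]
        omega
      have hPB : Acy E K PB := by
        refine Acy_cone E K PB ⟨?_, hPBd, ?_⟩ b ?_
        · exact ⟨Finset.empty_subset _, jw, hjwr, hjwne, 0, hjwsl, Finset.disjoint_empty_left _⟩
        · rintro σ ⟨h1, jj, hjj, hne, ii, hii, hd⟩
          exact hEfaces σ h1 jj ii hjj hii hd
        · rintro F ⟨h1, jj, hjj, hne, ii, hii, hd⟩
          refine ⟨Finset.insert_subset (Finset.mem_range.mpr hbrange) h1,
            jj, hjj, hne, ii, hii, ?_⟩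
          rw [Finset.disjoint_left]
          intro x hxF hxG
          rcases Finset.mem_insert.mp hxF with rfl | hxF'
          · exact (Finset.disjoint_right.mp (hGdisj jj hjj hne ii hii)) hbBk hxG
          · exact Finset.disjoint_left.mp hd hxF' hxG
      -- intersection `PA ∧ PB` via master with the other-runs passenger
      have hQoth : ∀ σ : Finset ℕ, (σ ⊆ Finset.range (o r) \ Bk ∧
          ∃ jj, jj < r ∧ jj ≠ j₀ ∧ ∃ ii, ii < sl jj ∧ Disjoint σ (G jj ii)) →
          σ ⊆ Finset.range (o r) \ Bk := fun σ h => h.1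
      have hABm : Acy E K (fun F => ((F \ Bk ⊆ Finset.range (o r) \ Bk ∧
          ∃ jj, jj < r ∧ jj ≠ j₀ ∧ ∃ ii, ii < sl jj ∧ Disjoint (F \ Bk) (G jj ii))) ∧
          ∃ ii, ii < sl j₀ ∧ Disjoint F (G j₀ ii)) := by
        refine Acy_congr E K (fun F => (hRunEq _ hQoth F)) ?_
        refine master (fun σ => σ ⊆ Finset.range (o r) \ Bk ∧
            ∃ jj, jj < r ∧ jj ≠ j₀ ∧ ∃ ii, ii < sl jj ∧ Disjoint σ (G jj ii))
          ⟨Finset.empty_subset _, jw, hjwr, hjwne, 0, hjwsl,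
            Finset.disjoint_empty_left _⟩ ?_ hQoth
          (sl j₀) 0 0 (by omega) hsl0 (by omega) ⟨p j₀, (hpd j₀ hj₀).1⟩
        rintro σ τ ⟨h1, jj, hjj, hne, ii, hii, hd⟩ hts
        exact ⟨hts.trans h1, jj, hjj, hne, ii, hii, Finset.disjoint_of_subset_left hts hd⟩
      have hPAB : Acy E K (fun F => (F ⊆ Finset.range (o r) ∧
          ∃ ii, ii < sl j₀ ∧ Disjoint F (G j₀ ii)) ∧ PB F) := by
        refine Acy_congr E K (fun F => ?_) hABm
        constructor
        · rintro ⟨⟨h1, jj, hjj, hne, ii, hii, hd⟩, ii0, hii0, hd0⟩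
          have hFr : F ⊆ Finset.range (o r) := by
            intro x hx
            by_cases hxBk : x ∈ Bk
            · exact hBkRange hxBk
            · exact (Finset.mem_sdiff.mp (h1 (Finset.mem_sdiff.mpr ⟨hx, hxBk⟩))).1
          refine ⟨⟨hFr, ii0, hii0, hd0⟩, hFr, jj, hjj, hne, ii, hii, ?_⟩
          rw [Finset.disjoint_left]
          intro x hxF hxG
          by_cases hxBk : x ∈ Bk
          · exact Finset.disjoint_left.mp (hGdisj jj hjj hne ii hii) hxG hxBk
          · exact Finset.disjoint_left.mp hd (Finset.mem_sdiff.mpr ⟨hxF, hxBk⟩) hxG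
        · rintro ⟨⟨hFr, ii0, hii0, hd0⟩, _, jj, hjj, hne, ii, hii, hd⟩
          refine ⟨⟨fun x hx => Finset.mem_sdiff.mpr
            ⟨hFr (Finset.mem_sdiff.mp hx).1, (Finset.mem_sdiff.mp hx).2⟩,
            jj, hjj, hne, ii, hii,
            Finset.disjoint_of_subset_left (Finset.sdiff_subset) hd⟩, ii0, hii0, hd0⟩
      have hunion := Acy_union E K hPAd hPBd hPA hPB hPAB
      refine Acy_congr E K (fun F => ?_) hunion
      rw [hEP F]
      constructor
      · rintro (⟨h1, ii, hii, hd⟩ | ⟨h1, jj, hjj, hne, ii, hii, hd⟩)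
        · exact ⟨h1, j₀, hj₀, ii, hii, hd⟩
        · exact ⟨h1, jj, hjj, ii, hii, hd⟩
      · rintro ⟨h1, jj, hjj, ii, hii, hd⟩
        by_cases hje : jj = j₀
        · subst hje; exact Or.inl ⟨h1, ii, hii, hd⟩
        · exact Or.inr ⟨h1, jj, hjj, hje, ii, hii, hd⟩
  -- ## conclusion
  intro i
  apply subQuot_subsingleton
  intro x
  rw [Submodule.mem_comap]
  have hx1 : (x : E.Chains K i) ∈ MM E K (fun F => F ∈ E.faces) i :=
    (mem_MM_iff E K).mpr fun σ _ => σ.2.1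
  obtain ⟨w, _, hwe⟩ := hacy i x.1 hx1 x.2
  exact Submodule.mem_map.mpr ⟨E.boundary K (i + 1) w, LinearMap.mem_range_self _ w, hwe⟩
end

section
/- Let Γ be a proper induced subcollection of Δ_{m,l}(C_n) on a proper subset U of the vertex set, and suppose Γ is connected. Then Γ is a run, i.e. the path complex of a line graph, whose facet set is {F_i : F_i a facet of Δ_{m,l}(C_n) with supp(F_i) ⊆ U}. -/
lemma runAux_shift (l n k A B t : ℕ) (hn : n = k * l)
    (hA1 : 1 ≤ A) (hA2 : A ≤ k) (hB1 : 1 ≤ B) :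
    ((A - 1) * l + ((B + k - A) % k) * l + t) % n = ((B - 1) * l + t) % n := by
  have hδl : ((B + k - A) % k) * l = ((B + k - A) * l) % n := by
    rw [hn, Nat.mul_mod_mul_right]
  have hcong : (A-1)*l + ((B+k-A)%k)*l + t ≡ (A-1)*l + (B+k-A)*l + t [MOD n] := by
    rw [hδl]; exact ((Nat.mod_modEq _ n).add_left _).add_right _
  have hfac : (A-1)*l + (B+k-A)*l + t = (B-1)*l + t + n := by
    have h1 : (A-1) + (B+k-A) = (B-1) + k := by omega
    calc (A-1)*l + (B+k-A)*l + t = ((A-1)+(B+k-A))*l + t := by rw [Nat.add_mul]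
      _ = ((B-1)+k)*l + t := by rw [h1]
      _ = (B-1)*l + t + n := by rw [Nat.add_mul, hn]; ring
  calc ((A-1)*l + ((B+k-A)%k)*l + t) % n
      = ((A-1)*l + (B+k-A)*l + t) % n := hcong
    _ = ((B-1)*l + t + n) % n := by rw [hfac]
    _ = ((B-1)*l + t) % n := Nat.add_mod_right _ _

lemma runAux_compl (k A B : ℕ) (hk0 : 0 < k) (hA1 : 1 ≤ A) (hA2 : A ≤ k)
    (hB1 : 1 ≤ B) (hB2 : B ≤ k) (hne : (B + k - A) % k ≠ 0) :
    (A + k - B) % k = k - (B + k - A) % k := by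
  rcases le_or_gt A B with h | h
  · have e1 : B + k - A = (B - A) + k := by omega
    rw [e1, Nat.add_mod_right, Nat.mod_eq_of_lt (show B - A < k by omega)] at hne ⊢
    rw [Nat.mod_eq_of_lt (show A + k - B < k by omega)]
    omega
  · have e2 : (B + k - A) % k = B + k - A := Nat.mod_eq_of_lt (by omega)
    have e1 : A + k - B = (A - B) + k := by omega
    rw [e1, Nat.add_mod_right, Nat.mod_eq_of_lt (show A - B < k by omega), e2]
    omega

lemma runAux_fill (l m n k : ℕ) (hl : 0 < l) (hn : n = k * l) (hk0 : 0 < k)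
    (A B : ℕ) (hA1 : 1 ≤ A) (hA2 : A ≤ k) (hB1 : 1 ≤ B) (hB2 : B ≤ k)
    (F : ℕ → Finset ℕ)
    (hF : ∀ i, F i = (Finset.range m).image fun q => ((i - 1) * l + q) % n)
    (hδm : ((B + k - A) % k) * l < m) (e : ℕ) (he : e ≤ (B + k - A) % k) :
    F ((A - 1 + e) % k + 1) ⊆ F A ∪ F B := by
  intro x hx
  rw [hF] at hx
  simp only [Finset.mem_image, Finset.mem_range] at hx
  obtain ⟨q, hq, hxe⟩ := hx
  simp only [Nat.add_sub_cancel] at hxe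
  have hel : e * l ≤ ((B + k - A) % k) * l := Nat.mul_le_mul_right l he
  have hmod : (A - 1 + e) % k * l = ((A-1)*l + e*l) % n := by
    rw [hn, ← Nat.mul_mod_mul_right l (A-1+e) k, Nat.add_mul]
  have hx2 : x = ((A-1)*l + (e*l + q)) % n := by
    rw [← hxe, hmod, Nat.mod_add_mod, Nat.add_assoc]
  by_cases hcase : e*l + q < m
  · refine Finset.mem_union_left _ ?_
    rw [hF]
    simp only [Finset.mem_image, Finset.mem_range]
    exact ⟨e*l+q, hcase, hx2.symm⟩
  · push_neg at hcase
    have hq'm : e*l + q - ((B + k - A) % k) * l < m := by omega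
    refine Finset.mem_union_right _ ?_
    rw [hF]
    simp only [Finset.mem_image, Finset.mem_range]
    refine ⟨e*l + q - ((B + k - A) % k) * l, hq'm, ?_⟩
    rw [hx2, ← runAux_shift l n k A B (e*l + q - ((B + k - A) % k) * l) hn hA1 hA2 hB1]
    congr 1
    omega

lemma runAux_dir (l m n k : ℕ) (hl : 0 < l) (hn : n = k * l) (hk0 : 0 < k) (hmn : m ≤ n)
    (A B q r : ℕ) (hA1 : 1 ≤ A) (hA2 : A ≤ k) (hB1 : 1 ≤ B) (hB2 : B ≤ k)
    (hq : q < m) (hr : r < m)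
    (heq : ((A-1)*l + q) % n = ((B-1)*l + r) % n) :
    ((B + k - A) % k) * l < m ∨ ((A + k - B) % k) * l < m := by
  have hδk : (B + k - A) % k < k := Nat.mod_lt _ hk0
  have hqr : q % n = (((B + k - A) % k)*l + r) % n := by
    have h1 : (A-1)*l + q ≡ (A-1)*l + (((B + k - A) % k)*l + r) [MOD n] := by
      show _ % n = _ % n
      rw [← Nat.add_assoc]
      exact heq.trans (runAux_shift l n k A B r hn hA1 hA2 hB1).symm
    exact h1.add_left_cancel'
  have hqn : q < n := lt_of_lt_of_le hq hmn
  rw [Nat.mod_eq_of_lt hqn] at hqr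
  have hδln : ((B + k - A) % k) * l + l ≤ n := by
    have h := Nat.mul_le_mul_right l (show (B + k - A) % k + 1 ≤ k by omega)
    rw [Nat.add_mul, one_mul, ← hn] at h
    exact h
  by_cases hcase : ((B + k - A) % k)*l + r < n
  · rw [Nat.mod_eq_of_lt hcase] at hqr; left; omega
  · push_neg at hcase
    have hmod : (((B + k - A) % k)*l + r) % n = ((B + k - A) % k)*l + r - n := by
      rw [Nat.mod_eq_sub_mod hcase]
      exact Nat.mod_eq_of_lt (by omega)
    rw [hmod] at hqr
    have hδ0 : (B + k - A) % k ≠ 0 := by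
      intro h
      rw [h] at hcase
      simp at hcase
      omega
    have hkdl : (k - (B + k - A) % k)*l = n - ((B + k - A) % k)*l := by
      rw [Nat.sub_mul, hn]
    right
    rw [runAux_compl k A B hk0 hA1 hA2 hB1 hB2 hδ0]
    omega

lemma runAux_interval {R : ℕ → ℕ → Prop} {f : ℕ → ℕ} {S K : Finset ℕ}
    (hSK : S ⊆ K)
    (hinj : ∀ c ∈ K, ∀ c' ∈ K, f c = f c' → c = c')
    (hR : ∀ A B, R A B → B ∈ S)
    (hedge : ∀ A B, R A B → ∀ c ∈ K,
      min (f A) (f B) ≤ f c → f c ≤ max (f A) (f B) → c ∈ S)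
    {A B : ℕ} (h : Relation.ReflTransGen R A B) (hA : A ∈ S) :
    ∀ c ∈ K, min (f A) (f B) ≤ f c → f c ≤ max (f A) (f B) → c ∈ S := by
  revert hA
  induction h using Relation.ReflTransGen.head_induction_on with
  | refl =>
    intro hB c hc h1 h2
    have : f c = f B := by omega
    have := hinj c hc B (hSK hB) this
    subst this; exact hB
  | head hAA' _ ih =>
    rename_i X X' hpath
    intro hX c hc h1 h2
    by_cases hcase : min (f X) (f X') ≤ f c ∧ f c ≤ max (f X) (f X')
    · exact hedge X X' hAA' c hc hcase.1 hcase.2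
    · exact ih (hR _ _ hAA') c hc (by omega) (by omega)
/-- Remark 3.7.  Let `Δ_{m,l}(C_n) = ⟨F_1, ..., F_k⟩` be the path
complex of the cycle with standard labeling (here realised on the 0-based vertex set
`{0, ..., n-1}`, with `F i = {(i-1)*l, ..., (i-1)*l + m - 1}` mod `n` for `1 ≤ i ≤ k`).
Let `Γ` be a proper induced subcollection of `Δ_{m,l}(C_n)` on a proper subset
`U ⊊ {0, ..., n-1}`; its facet set is `{F i : F i ⊆ U}`, recorded by the index set
`S = {i ∈ [1, k] : F i ⊆ U}`.  If `Γ` is connected (any two of its facets are joined by a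
chain of facets of `Γ` with consecutive ones intersecting), then `Γ` is a run, i.e. the
path complex of a line graph: its facet indices form a set of consecutive indices
(cyclically) `a+1, a+2, ..., a+p` (mod `k`) for some `a` and some `p < k`. -/
theorem induced_connected_subcollection_is_run
    (l m n k : ℕ)
    (hl : 0 < l) (hm : 2 ≤ m) (hmn : m ≤ n) (hln : l ∣ n)
    (hlm1 : l ≤ m - 1) (hln2 : l ≤ n / 2) (hk : k = n / l)
    (F : ℕ → Finset ℕ)
    (hF : ∀ i, F i = (Finset.range m).image fun q => ((i - 1) * l + q) % n)
    (U : Finset ℕ) (hU : U ⊂ Finset.range n)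
    (S : Finset ℕ) (hS : S = (Finset.Icc 1 k).filter fun i => F i ⊆ U)
    (hconn : ∀ i₁ ∈ S, ∀ i₂ ∈ S, Relation.ReflTransGen
      (fun A B : ℕ => A ∈ S ∧ B ∈ S ∧ (F A ∩ F B).Nonempty) i₁ i₂) :
    ∃ a p : ℕ, p < k ∧ S = (Finset.range p).image fun e => (a + e) % k + 1 := by
  -- basic setup
  obtain ⟨k', hk'⟩ := hln
  have hn : n = k * l := by
    rw [hk, hk', Nat.mul_div_cancel_left _ hl]; ring
  have hk0 : 0 < k := by
    rcases Nat.eq_zero_or_pos k with h | h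
    · rw [h] at hn; omega
    · exact h
  have hSsub : S ⊆ Finset.Icc 1 k := by rw [hS]; exact Finset.filter_subset _ _
  have hmemS : ∀ i, i ∈ S ↔ (i ∈ Finset.Icc 1 k ∧ F i ⊆ U) := by
    intro i; rw [hS]; simp [Finset.mem_filter]
  rcases S.eq_empty_or_nonempty with hSe | hSne
  · exact ⟨0, 0, hk0, by simp [hSe]⟩
  -- find a missing index b
  have hbex : ∃ b ∈ Finset.Icc 1 k, b ∉ S := by
    by_contra hcon
    push_neg at hcon
    have hall : Finset.range n ⊆ U := by
      intro v hv
      rw [Finset.mem_range] at hv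
      have hik : v / l + 1 ∈ Finset.Icc 1 k := by
        rw [Finset.mem_Icc]
        have h := (Nat.div_lt_iff_lt_mul hl).mpr (show v < k * l by omega)
        exact ⟨Nat.le_add_left _ _, h⟩
      have hvF : v ∈ F (v / l + 1) := by
        rw [hF]
        simp only [Finset.mem_image, Finset.mem_range, Nat.add_sub_cancel]
        refine ⟨v % l, by have := Nat.mod_lt v hl; omega, ?_⟩
        have hdm : v / l * l + v % l = v := by
          rw [Nat.mul_comm]; exact Nat.div_add_mod v l
        rw [hdm]
        exact Nat.mod_eq_of_lt hv
      exact ((hmemS _).mp (hcon _ hik)).2 hvF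
    exact hU.2 hall
  obtain ⟨b, hbK, hbS⟩ := hbex
  have hb : 1 ≤ b ∧ b ≤ k := Finset.mem_Icc.mp hbK
  have hk2 : 2 ≤ k := by
    obtain ⟨i₀, hi₀⟩ := hSne
    have h1 := Finset.mem_Icc.mp (hSsub hi₀)
    have hne : i₀ ≠ b := fun h => hbS (h ▸ hi₀)
    omega
  -- position function
  obtain ⟨pos, hposdef⟩ : ∃ pos : ℕ → ℕ, ∀ i, pos i = (i - 1 + (k - b)) % k :=
    ⟨_, fun i => rfl⟩
  have hposlt : ∀ i, pos i < k := fun i => by rw [hposdef]; exact Nat.mod_lt _ hk0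
  have hrec : ∀ i, 1 ≤ i → i ≤ k → (pos i + b) % k = i - 1 := by
    intro i h1 h2
    rw [hposdef, Nat.mod_add_mod]
    rw [show i - 1 + (k - b) + b = (i-1) + k by omega, Nat.add_mod_right]
    exact Nat.mod_eq_of_lt (by omega)
  have hinj : ∀ c ∈ Finset.Icc 1 k, ∀ c' ∈ Finset.Icc 1 k, pos c = pos c' → c = c' := by
    intro c hc c' hc' hcc
    rw [Finset.mem_Icc] at hc hc'
    have h1 := hrec c hc.1 hc.2
    have h2 := hrec c' hc'.1 hc'.2
    rw [hcc, h2] at h1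
    omega
  have hposb : pos b = k - 1 := by
    rw [hposdef, show b - 1 + (k - b) = k - 1 by omega]
    exact Nat.mod_eq_of_lt (by omega)
  have hposS : ∀ i ∈ S, pos i ≤ k - 2 := by
    intro i hi
    have hiK := hSsub hi
    have h1 := hposlt i
    have h2 : pos i ≠ k - 1 := by
      intro h
      have : i = b := hinj i hiK b hbK (by rw [h, hposb])
      exact hbS (this ▸ hi)
    omega
  -- directional key lemma
  have key : ∀ A B, A ∈ S → B ∈ S → ((B + k - A) % k) * l < m →
      pos B = pos A + (B + k - A) % k ∧
      ∀ c ∈ Finset.Icc 1 k, pos A ≤ pos c → pos c ≤ pos B → c ∈ S := by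
    intro A B hAS hBS hδm
    have hAK := Finset.mem_Icc.mp (hSsub hAS)
    have hBK := Finset.mem_Icc.mp (hSsub hBS)
    have hδk : (B + k - A) % k < k := Nat.mod_lt _ hk0
    have hceS : ∀ e ≤ (B + k - A) % k, ((A - 1 + e) % k + 1) ∈ S := by
      intro e he
      have hsub := runAux_fill l m n k hl hn hk0 A B hAK.1 hAK.2 hBK.1 hBK.2 F hF hδm e he
      refine (hmemS _).mpr ⟨?_, ?_⟩
      · rw [Finset.mem_Icc]
        have := Nat.mod_lt (A - 1 + e) hk0
        omega
      · intro x hx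
        rcases Finset.mem_union.mp (hsub hx) with h | h
        · exact ((hmemS A).mp hAS).2 h
        · exact ((hmemS B).mp hBS).2 h
    have hposc : ∀ e, pos ((A - 1 + e) % k + 1) = (pos A + e) % k := by
      intro e
      rw [hposdef, hposdef, Nat.add_sub_cancel, Nat.mod_add_mod, Nat.mod_add_mod]
      congr 1
      omega
    have hnw : pos A + (B + k - A) % k < k := by
      by_contra hcon
      push_neg at hcon
      have hpA := hposS A hAS
      have he : k - 1 - pos A ≤ (B + k - A) % k := by omega
      have hval : pos ((A - 1 + (k - 1 - pos A)) % k + 1) = k - 1 := by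
        rw [hposc, show pos A + (k - 1 - pos A) = k - 1 by omega]
        exact Nat.mod_eq_of_lt (by omega)
      have hcK : (A - 1 + (k - 1 - pos A)) % k + 1 ∈ Finset.Icc 1 k := by
        rw [Finset.mem_Icc]
        have := Nat.mod_lt (A - 1 + (k - 1 - pos A)) hk0
        omega
      have heqb := hinj _ hcK b hbK (by rw [hval, hposb])
      exact hbS (heqb ▸ hceS _ he)
    have hBeq : (A - 1 + (B + k - A) % k) % k + 1 = B := by
      have h2 : (A - 1 + (B + k - A) % k) % k = (A - 1 + (B + k - A)) % k :=
        Nat.add_mod_mod _ _ _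
      rw [h2, show A - 1 + (B + k - A) = (B - 1) + k by omega, Nat.add_mod_right,
        Nat.mod_eq_of_lt (show B - 1 < k by omega)]
      omega
    have hposB : pos B = pos A + (B + k - A) % k := by
      conv_lhs => rw [← hBeq]
      rw [hposc, Nat.mod_eq_of_lt hnw]
    refine ⟨hposB, ?_⟩
    intro c hcK h1 h2
    have he : pos c - pos A ≤ (B + k - A) % k := by omega
    have hceq : pos ((A - 1 + (pos c - pos A)) % k + 1) = pos c := by
      rw [hposc, show pos A + (pos c - pos A) = pos c by omega]
      exact Nat.mod_eq_of_lt (hposlt c)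
    have hcK' : (A - 1 + (pos c - pos A)) % k + 1 ∈ Finset.Icc 1 k := by
      rw [Finset.mem_Icc]
      have := Nat.mod_lt (A - 1 + (pos c - pos A)) hk0
      omega
    have hcc := hinj c hcK _ hcK' hceq.symm
    rw [hcc]
    exact hceS _ he
  -- edge lemma for the generic interval machinery
  have hedge : ∀ A B, (A ∈ S ∧ B ∈ S ∧ (F A ∩ F B).Nonempty) → ∀ c ∈ Finset.Icc 1 k,
      min (pos A) (pos B) ≤ pos c → pos c ≤ max (pos A) (pos B) → c ∈ S := by
    rintro A B ⟨hAS, hBS, x, hx⟩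
    rw [Finset.mem_inter, hF A, hF B] at hx
    simp only [Finset.mem_image, Finset.mem_range] at hx
    obtain ⟨⟨q, hq, hqe⟩, ⟨r, hr, hre⟩⟩ := hx
    have hAK := Finset.mem_Icc.mp (hSsub hAS)
    have hBK := Finset.mem_Icc.mp (hSsub hBS)
    have hdir := runAux_dir l m n k hl hn hk0 hmn A B q r hAK.1 hAK.2 hBK.1 hBK.2 hq hr
      (hqe.trans hre.symm)
    rcases hdir with h | h
    · obtain ⟨hposB, hfill⟩ := key A B hAS hBS h
      intro c hc h1 h2
      exact hfill c hc (by omega) (by omega)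
    · obtain ⟨hposA, hfill⟩ := key B A hBS hAS h
      intro c hc h1 h2
      exact hfill c hc (by omega) (by omega)
  have hival : ∀ A ∈ S, ∀ B ∈ S, ∀ c ∈ Finset.Icc 1 k,
      min (pos A) (pos B) ≤ pos c → pos c ≤ max (pos A) (pos B) → c ∈ S := by
    intro A hA B hB
    exact runAux_interval hSsub hinj (fun A B h => h.2.1) hedge (hconn A hA B hB) hA
  -- final assembly
  have hPne : (S.image pos).Nonempty := hSne.image pos
  obtain ⟨A₀, hA₀S, hA₀⟩ := Finset.mem_image.mp ((S.image pos).min'_mem hPne)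
  obtain ⟨B₀, hB₀S, hB₀⟩ := Finset.mem_image.mp ((S.image pos).max'_mem hPne)
  have hminle : ∀ i ∈ S, pos A₀ ≤ pos i := fun i hi =>
    hA₀ ▸ Finset.min'_le _ _ (Finset.mem_image_of_mem pos hi)
  have hmaxle : ∀ i ∈ S, pos i ≤ pos B₀ := fun i hi =>
    hB₀ ▸ Finset.le_max' _ _ (Finset.mem_image_of_mem pos hi)
  have hmax2 : pos B₀ ≤ k - 2 := hposS B₀ hB₀S
  have hminmax : pos A₀ ≤ pos B₀ := hminle B₀ hB₀S
  have hcv : ∀ v, pos A₀ ≤ v → v ≤ pos B₀ → ((v + b) % k + 1) ∈ S := by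
    intro v h1 h2
    have hvk : v < k := by omega
    have hcK : (v + b) % k + 1 ∈ Finset.Icc 1 k := by
      rw [Finset.mem_Icc]
      have := Nat.mod_lt (v + b) hk0
      omega
    have hpc : pos ((v + b) % k + 1) = v := by
      rw [hposdef, Nat.add_sub_cancel, Nat.mod_add_mod,
        show v + b + (k - b) = v + k by omega, Nat.add_mod_right]
      exact Nat.mod_eq_of_lt hvk
    exact hival A₀ hA₀S B₀ hB₀S _ hcK (by rw [hpc]; omega) (by rw [hpc]; omega)
  refine ⟨pos A₀ + b, pos B₀ - pos A₀ + 1, by omega, ?_⟩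
  ext i
  simp only [Finset.mem_image, Finset.mem_range]
  constructor
  · intro hiS
    have hiK := Finset.mem_Icc.mp (hSsub hiS)
    have h1 : pos A₀ ≤ pos i := hminle i hiS
    have h2 : pos i ≤ pos B₀ := hmaxle i hiS
    refine ⟨pos i - pos A₀, by omega, ?_⟩
    rw [show pos A₀ + b + (pos i - pos A₀) = pos i + b by omega, hrec i hiK.1 hiK.2]
    omega
  · rintro ⟨e, he, rfl⟩
    rw [show pos A₀ + b + e = (pos A₀ + e) + b by omega]
    exact hcv (pos A₀ + e) (by omega) (by omega)
end
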